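/- The polynomials Δ₁(a) = a₄² − 4a₂a₆ and Δ₂(a) = a₄³ + 2a₃a₄² − 4a₂a₄a₆ + 2a₁a₄a₅ − 8a₂a₃a₆ − 2a₂a₅² − 2a₁²a₆ each satisfy, at every point a ∈ ℝ⁶, the five determining equations for invariants of the heat-equation symmetry algebra: (i) a₄φ₁ − a₅φ₃ + 2a₆φ₅ = 0; (ii) a₅φ₁ + a₄φ₂ + a₆(2φ₄ − φ₃) = 0; (iii) −a₁φ₁ − 2a₂φ₂ + a₅φ₅ + 2a₆φ₆ = 0; (iv) −2a₂φ₁ + a₁φ₃ − a₄φ₅ = 0; (v) 2a₂φ₃ − 4a₂φ₄ − 2a₁φ₅ − 2a₄φ₆ = 0, where φᵢ denotes the partial derivative ∂φ/∂aᵢ of the polynomial φ ∈ {Δ₁, Δ₂}. -/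

import Mathlib

/-- the killing-form invariant Δ₁ = a₄² − 4a₂a₆ -/
def Delta1 (a : Fin 6 → ℝ) : ℝ := (a 3) ^ 2 - 4 * a 1 * a 5

/-- the cubic invariant Δ₂ -/
def Delta2 (a : Fin 6 → ℝ) : ℝ :=
  (a 3) ^ 3 + 2 * a 2 * (a 3) ^ 2 - 4 * a 1 * a 3 * a 5 + 2 * a 0 * a 3 * a 4
    - 8 * a 1 * a 2 * a 5 - 2 * a 1 * (a 4) ^ 2 - 2 * (a 0) ^ 2 * a 5

/-- the partial derivative ∂φ/∂aᵢ of a function φ : ℝ⁶ → ℝ -/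
noncomputable def pd (φ : (Fin 6 → ℝ) → ℝ) (i : Fin 6) (a : Fin 6 → ℝ) : ℝ :=
  fderiv ℝ φ a (Pi.single i 1)

noncomputable abbrev P (i : Fin 6) : (Fin 6 → ℝ) →L[ℝ] ℝ := ContinuousLinearMap.proj i

lemma hP (i : Fin 6) (a : Fin 6 → ℝ) : HasFDerivAt (fun v : Fin 6 → ℝ => v i) (P i) a :=
  (ContinuousLinearMap.proj i : (Fin 6 → ℝ) →L[ℝ] ℝ).hasFDerivAt

lemma hD1 (a : Fin 6 → ℝ) : HasFDerivAt Delta1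
    ((2 * a 3) • P 3 + (-4 * a 5) • P 1 + (-4 * a 1) • P 5) a := by
  have h := (((hP 3 a).mul (hP 3 a))).sub ((((hP 1 a).const_mul 4)).mul (hP 5 a))
  have hfun : Delta1 = (fun x : Fin 6 → ℝ => x 3 * x 3 - 4 * x 1 * x 5) := by
    funext x; simp only [Delta1]; ring
  rw [hfun]
  refine h.congr_fderiv ?_
  ext v
  simp only [ContinuousLinearMap.add_apply, ContinuousLinearMap.sub_apply,
    ContinuousLinearMap.neg_apply, ContinuousLinearMap.smul_apply,
    ContinuousLinearMap.proj_apply, smul_eq_mul, nsmul_eq_mul, Nat.cast_ofNat]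
  ring

lemma pd_D1 (i : Fin 6) (a : Fin 6 → ℝ) :
    pd Delta1 i a = (2 * a 3) * (Pi.single i 1 : Fin 6 → ℝ) 3 + (-4 * a 5) * (Pi.single i 1 : Fin 6 → ℝ) 1
      + (-4 * a 1) * (Pi.single i 1 : Fin 6 → ℝ) 5 := by
  rw [pd, (hD1 a).fderiv]; simp [smul_eq_mul]

lemma hD2 (a : Fin 6 → ℝ) : HasFDerivAt Delta2
    ((2 * a 3 * a 4 - 4 * a 0 * a 5) • P 0
      + (-4 * a 3 * a 5 - 8 * a 2 * a 5 - 2 * (a 4)^2) • P 1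
      + (2 * (a 3)^2 - 8 * a 1 * a 5) • P 2
      + (3 * (a 3)^2 + 4 * a 2 * a 3 - 4 * a 1 * a 5 + 2 * a 0 * a 4) • P 3
      + (2 * a 0 * a 3 - 4 * a 1 * a 4) • P 4
      + (-4 * a 1 * a 3 - 8 * a 1 * a 2 - 2 * (a 0)^2) • P 5) a := by
  have h := (((((((((hP 3 a).mul (hP 3 a)).mul (hP 3 a))).add
      ((((hP 2 a).const_mul 2).mul (((hP 3 a).mul (hP 3 a)))))).add
      (((((hP 1 a).const_mul 4).mul (hP 3 a)).mul (hP 5 a)).neg)).add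
      ((((hP 0 a).const_mul 2).mul (hP 3 a)).mul (hP 4 a))).sub
      ((((hP 1 a).const_mul 8).mul (hP 2 a)).mul (hP 5 a))).sub
      (((hP 1 a).const_mul 2).mul (((hP 4 a).mul (hP 4 a))))).sub
      (((((hP 0 a).mul (hP 0 a))).const_mul 2).mul (hP 5 a))
  have hfun : Delta2 = (fun x : Fin 6 → ℝ =>
      x 3 * x 3 * x 3 + 2 * x 2 * (x 3 * x 3) + -(4 * x 1 * x 3 * x 5) + 2 * x 0 * x 3 * x 4
        - 8 * x 1 * x 2 * x 5 - 2 * x 1 * (x 4 * x 4) - 2 * (x 0 * x 0) * x 5) := by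
    funext x; simp only [Delta2]; ring
  rw [hfun]
  refine h.congr_fderiv ?_
  ext v
  simp only [ContinuousLinearMap.add_apply, ContinuousLinearMap.sub_apply,
    ContinuousLinearMap.neg_apply, ContinuousLinearMap.smul_apply,
    ContinuousLinearMap.proj_apply, smul_eq_mul, nsmul_eq_mul, Nat.cast_ofNat, Pi.mul_apply]
  ring

lemma pd_D2 (i : Fin 6) (a : Fin 6 → ℝ) :
    pd Delta2 i a = (2 * a 3 * a 4 - 4 * a 0 * a 5) * (Pi.single i 1 : Fin 6 → ℝ) 0
      + (-4 * a 3 * a 5 - 8 * a 2 * a 5 - 2 * (a 4)^2) * (Pi.single i 1 : Fin 6 → ℝ) 1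
      + (2 * (a 3)^2 - 8 * a 1 * a 5) * (Pi.single i 1 : Fin 6 → ℝ) 2
      + (3 * (a 3)^2 + 4 * a 2 * a 3 - 4 * a 1 * a 5 + 2 * a 0 * a 4) * (Pi.single i 1 : Fin 6 → ℝ) 3
      + (2 * a 0 * a 3 - 4 * a 1 * a 4) * (Pi.single i 1 : Fin 6 → ℝ) 4
      + (-4 * a 1 * a 3 - 8 * a 1 * a 2 - 2 * (a 0)^2) * (Pi.single i 1 : Fin 6 → ℝ) 5 := by
  rw [pd, (hD2 a).fderiv]; simp [smul_eq_mul]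

theorem heat_determining_equations :
    ∀ φ ∈ ({Delta1, Delta2} : Set ((Fin 6 → ℝ) → ℝ)), ∀ a : Fin 6 → ℝ,
      a 3 * pd φ 0 a - a 4 * pd φ 2 a + 2 * a 5 * pd φ 4 a = 0 ∧
      a 4 * pd φ 0 a + a 3 * pd φ 1 a + a 5 * (2 * pd φ 3 a - pd φ 2 a) = 0 ∧
      -(a 0) * pd φ 0 a - 2 * a 1 * pd φ 1 a + a 4 * pd φ 4 a
        + 2 * a 5 * pd φ 5 a = 0 ∧
      -2 * a 1 * pd φ 0 a + a 0 * pd φ 2 a - a 3 * pd φ 4 a = 0 ∧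
      2 * a 1 * pd φ 2 a - 4 * a 1 * pd φ 3 a - 2 * a 0 * pd φ 4 a
        - 2 * a 3 * pd φ 5 a = 0 := by
  rintro φ (rfl | rfl) a <;>
    refine ⟨?_, ?_, ?_, ?_, ?_⟩ <;>
    simp [pd_D1, pd_D2, Pi.single_apply] <;> ring
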